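/- Let D be a closed symmetric densely defined operator on a complex Hilbert space H, and let 𝒜 ⊆ B(H) be a *-closed set of bounded operators each of which maps Dom D* into Dom D* and has bounded commutator [D*,a] := D*a − aD* (defined on Dom D*, extended to H). Let A be the C*-subalgebra of B(H) generated by 𝒜, and suppose (u_n) is a sequence in 𝒜 with ‖[D*,u_n]‖ → 0 which is an approximate unit for A in operator norm (‖u_n b − b‖ → 0 and ‖b u_n − b‖ → 0 for all b ∈ A). Then the following are equivalent: (i) (u_n) is an approximate unit for 𝒜 in the Lipschitz norm, i.e. for every a ∈ 𝒜 both ‖[D*, a u_n − a]‖ → 0 and ‖[D*, u_n a − a]‖ → 0; (ii) (u_n) is an approximate unit in operator norm for the C*-subalgebra of B(H) generated by A together with the commutators {[D*,a] : a ∈ 𝒜}. -/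

import Mathlib

set_option synthInstance.maxHeartbeats 1000000
set_option maxHeartbeats 1000000

open Filter Topology
open scoped Classical

/-- Application of a partially defined operator, with junk value `0` off the domain. -/
noncomputable def pApply {H : Type*} [NormedAddCommGroup H] [InnerProductSpace ℂ H]
    (D : H →ₗ.[ℂ] H) (x : H) : H :=
  if hm : x ∈ D.domain then D ⟨x, hm⟩ else 0

lemma pApply_eq {H : Type*} [NormedAddCommGroup H] [InnerProductSpace ℂ H]
    (D : H →ₗ.[ℂ] H) {x : H} (hx : x ∈ D.domain) :
    pApply D x = D ⟨x, hx⟩ := by simp [pApply, hx]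

lemma bound_of_dense {H : Type*} [NormedAddCommGroup H] [InnerProductSpace ℂ H]
    {V : Submodule ℂ H} (hd : Dense (V : Set H)) (S : H →L[ℂ] H) {c : ℝ}
    (hb : ∀ x ∈ V, ‖S x‖ ≤ c * ‖x‖) : ∀ x : H, ‖S x‖ ≤ c * ‖x‖ := by
  have hcl : IsClosed {x : H | ‖S x‖ ≤ c * ‖x‖} :=
    isClosed_le (S.continuous.norm) (continuous_const.mul continuous_norm)
  intro x
  exact hcl.closure_subset_iff.mpr (fun y hy => hb y hy) (hd x)

lemma tendsto_zero_of_approx {g : ℕ → ℝ} (hg : ∀ n, 0 ≤ g n)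
    (h : ∀ ε > (0:ℝ), ∃ h' : ℕ → ℝ, Tendsto h' atTop (𝓝 0) ∧ ∀ n, g n ≤ h' n + ε / 2) :
    Tendsto g atTop (𝓝 0) := by
  rw [Metric.tendsto_atTop]
  intro ε hε
  obtain ⟨h', hh', hb⟩ := h ε hε
  obtain ⟨N, hN⟩ := (Metric.tendsto_atTop.mp hh') (ε/2) (by linarith)
  refine ⟨N, fun n hn => ?_⟩
  have h1 := hN n hn
  rw [Real.dist_eq, sub_zero] at h1 ⊢
  have h2 : |g n| = g n := abs_of_nonneg (hg n)
  have h3 : h' n ≤ |h' n| := le_abs_self _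
  rw [h2]
  linarith [hb n]

lemma key_lemma {H : Type*} [NormedAddCommGroup H] [InnerProductSpace ℂ H] [CompleteSpace H]
    (D : H →ₗ.[ℂ] H) (𝒜 : Set (H →L[ℂ] H))
    (hmap : ∀ a ∈ 𝒜, ∀ h ∈ D.adjoint.domain, a h ∈ D.adjoint.domain)
    (u : ℕ → H →L[ℂ] H) (hu : ∀ n, u n ∈ 𝒜)
    (a : H →L[ℂ] H) (ha : a ∈ 𝒜) (T : H →L[ℂ] H)
    (hT : ∀ h : D.adjoint.domain, T (h : H) = pApply D.adjoint (a (h : H)) - a (D.adjoint h))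
    (n : ℕ) (h : D.adjoint.domain) :
    (pApply D.adjoint ((a * u n - a) (h : H)) - (a * u n - a) (D.adjoint h)
      = (T * u n - T) (h : H) + a (pApply D.adjoint (u n (h : H)) - u n (D.adjoint h))) ∧
    (pApply D.adjoint ((u n * a - a) (h : H)) - (u n * a - a) (D.adjoint h)
      = (u n * T - T) (h : H)
        + (pApply D.adjoint (u n (a (h : H)))
            - u n (D.adjoint ⟨a (h : H), hmap a ha (h : H) h.2⟩))) := by
  have hu' : u n (h : H) ∈ D.adjoint.domain := hmap (u n) (hu n) _ h.2
  have ha' : a (h : H) ∈ D.adjoint.domain := hmap a ha (h : H) h.2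
  have hau : a (u n (h : H)) ∈ D.adjoint.domain := hmap a ha _ hu'
  have hua : u n (a (h : H)) ∈ D.adjoint.domain := hmap (u n) (hu n) _ ha'
  have hTh : T (h : H) = pApply D.adjoint (a (h : H)) - a (D.adjoint h) := hT h
  rw [pApply_eq _ ha'] at hTh
  constructor
  · have e1 : (a * u n - a) ((h : H)) = a (u n (h : H)) - a (h : H) := by
      simp [ContinuousLinearMap.sub_apply, ContinuousLinearMap.mul_apply]
    have hmem : a (u n (h : H)) - a (h : H) ∈ D.adjoint.domain := sub_mem hau ha'
    have esub : (⟨a (u n (h : H)) - a (h : H), hmem⟩ : D.adjoint.domain)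
        = ⟨a (u n (h : H)), hau⟩ - ⟨a (h : H), ha'⟩ := rfl
    have hTuh : T (u n (h : H))
        = pApply D.adjoint (a (u n (h : H))) - a (D.adjoint ⟨u n (h : H), hu'⟩) :=
      hT ⟨u n (h : H), hu'⟩
    rw [pApply_eq _ hau] at hTuh
    rw [e1, pApply_eq _ hmem, pApply_eq _ hu', esub, LinearPMap.map_sub]
    simp only [ContinuousLinearMap.sub_apply, ContinuousLinearMap.mul_apply, hTuh, hTh,
      map_sub]
    abel
  · have e1 : (u n * a - a) ((h : H)) = u n (a (h : H)) - a (h : H) := by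
      simp [ContinuousLinearMap.sub_apply, ContinuousLinearMap.mul_apply]
    have hmem : u n (a (h : H)) - a (h : H) ∈ D.adjoint.domain := sub_mem hua ha'
    have esub : (⟨u n (a (h : H)) - a (h : H), hmem⟩ : D.adjoint.domain)
        = ⟨u n (a (h : H)), hua⟩ - ⟨a (h : H), ha'⟩ := rfl
    rw [e1, pApply_eq _ hmem, pApply_eq _ hua, esub, LinearPMap.map_sub]
    simp only [ContinuousLinearMap.sub_apply, ContinuousLinearMap.mul_apply, hTh, map_sub]
    abel

lemma exists_ext {H : Type*} [NormedAddCommGroup H] [InnerProductSpace ℂ H] [CompleteSpace H]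
    (D : H →ₗ.[ℂ] H) (hdV : Dense ((D.adjoint.domain : Submodule ℂ H) : Set H))
    (a : H →L[ℂ] H)
    (hmapa : ∀ h ∈ D.adjoint.domain, a h ∈ D.adjoint.domain)
    (M : ℝ) (hM : ∀ h : D.adjoint.domain,
      ‖pApply D.adjoint (a h) - a (D.adjoint h)‖ ≤ M * ‖(h : H)‖) :
    ∃ T : H →L[ℂ] H, ∀ h : D.adjoint.domain,
      T (h : H) = pApply D.adjoint (a (h : H)) - a (D.adjoint h) := by
  set V := D.adjoint.domain with hV
  let aD : V →ₗ[ℂ] V :=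
    LinearMap.codRestrict V ((a : H →ₗ[ℂ] H).comp V.subtype) (fun c => hmapa _ c.2)
  let C : V →ₗ[ℂ] H := (D.adjoint.toFun.comp aD) - ((a : H →ₗ[ℂ] H).comp D.adjoint.toFun)
  have hCb : ∀ h : V, ‖C h‖ ≤ M * ‖h‖ := by
    intro h
    have h1 := hM h
    rw [pApply_eq _ (hmapa _ h.2)] at h1
    exact h1
  let Ccont : V →L[ℂ] H := C.mkContinuous M hCb
  have hdr : DenseRange (V.subtypeL : V →L[ℂ] H) := by
    simpa [DenseRange, Subtype.range_coe] using hdV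
  have hui : IsUniformInducing (V.subtypeL : V →L[ℂ] H) :=
    isUniformEmbedding_subtype_val.isUniformInducing
  refine ⟨Ccont.extend V.subtypeL, fun h => ?_⟩
  have he : Ccont.extend V.subtypeL (V.subtypeL h) = Ccont h :=
    ContinuousLinearMap.extend_eq (f := Ccont) (e := V.subtypeL) hdr hui h
  rw [pApply_eq _ (hmapa _ h.2)]
  exact he

lemma exists_bound {H : Type*} [NormedAddCommGroup H] [InnerProductSpace ℂ H] [CompleteSpace H]
    (𝒜 : Set (H →L[ℂ] H))
    (hstar : ∀ a ∈ 𝒜, ContinuousLinearMap.adjoint a ∈ 𝒜)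
    (u : ℕ → H →L[ℂ] H) (hu : ∀ n, u n ∈ 𝒜)
    (huA : ∀ b ∈ (NonUnitalAlgebra.adjoin ℂ 𝒜).topologicalClosure,
      Tendsto (fun n => ‖u n * b - b‖) atTop (𝓝 0) ∧
      Tendsto (fun n => ‖b * u n - b‖) atTop (𝓝 0)) :
    ∃ C : ℝ, 0 ≤ C ∧ ∀ n, ‖u n‖ ≤ C := by
  set E : Submodule ℂ (H →L[ℂ] H) :=
    ((NonUnitalAlgebra.adjoin ℂ 𝒜).toSubmodule).topologicalClosure with hE
  haveI : CompleteSpace E := by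
    have : IsClosed (E : Set (H →L[ℂ] H)) := Submodule.isClosed_topologicalClosure _
    exact this.completeSpace_coe
  set g : ℕ → E →L[ℂ] (H →L[ℂ] H) :=
    fun n => (ContinuousLinearMap.mul ℂ (H →L[ℂ] H) (u n)).comp E.subtypeL with hg
  have hmemE : ∀ x : E, (x : H →L[ℂ] H) ∈ (NonUnitalAlgebra.adjoin ℂ 𝒜).topologicalClosure := by
    intro x
    exact x.2
  have hpt : ∀ x : E, ∃ c : ℝ, ∀ n, ‖g n x‖ ≤ c := by
    intro x
    have h1 := (huA _ (hmemE x)).1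
    obtain ⟨c, hc⟩ := h1.bddAbove_range
    refine ⟨c + ‖(x : H →L[ℂ] H)‖, fun n => ?_⟩
    have h2 : ‖u n * (x : H →L[ℂ] H) - x‖ ≤ c := hc ⟨n, rfl⟩
    have h3 : ‖g n x‖ = ‖u n * (x : H →L[ℂ] H)‖ := rfl
    rw [h3]
    calc ‖u n * (x : H →L[ℂ] H)‖ ≤ ‖u n * (x : H →L[ℂ] H) - x‖ + ‖(x : H →L[ℂ] H)‖ := by
          simpa using norm_add_le (u n * (x : H →L[ℂ] H) - x) x
      _ ≤ c + ‖(x : H →L[ℂ] H)‖ := by linarith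
  obtain ⟨C', hC'⟩ := banach_steinhaus hpt
  refine ⟨max C' 0, le_max_right _ _, fun n => ?_⟩
  have hmem : star (u n) ∈ E := by
    have h1 : ContinuousLinearMap.adjoint (u n) ∈ 𝒜 := hstar (u n) (hu n)
    have h2 : star (u n) = ContinuousLinearMap.adjoint (u n) :=
      ContinuousLinearMap.star_eq_adjoint _
    rw [h2]
    exact subset_closure (NonUnitalAlgebra.subset_adjoin ℂ h1)
  have h4 : ‖g n ⟨star (u n), hmem⟩‖ ≤ C' * ‖u n‖ := by
    calc ‖g n ⟨star (u n), hmem⟩‖ ≤ ‖g n‖ * ‖(⟨star (u n), hmem⟩ : E)‖ :=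
          (g n).le_opNorm _
      _ ≤ C' * ‖(⟨star (u n), hmem⟩ : E)‖ :=
          mul_le_mul_of_nonneg_right (hC' n) (norm_nonneg _)
      _ = C' * ‖u n‖ := by
          rw [show ‖(⟨star (u n), hmem⟩ : E)‖ = ‖star (u n)‖ from rfl, norm_star]
  have h5 : ‖g n ⟨star (u n), hmem⟩‖ = ‖u n‖ * ‖u n‖ := by
    have : g n ⟨star (u n), hmem⟩ = u n * star (u n) := rfl
    rw [this, CStarRing.norm_self_mul_star]
  nlinarith [norm_nonneg (u n), le_max_left C' 0, le_max_right C' 0]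

/-- Let `D` be a closed symmetric densely defined operator on a complex
Hilbert space `H` and `𝒜 ⊆ B(H)` a *-closed set of bounded operators, each preserving
`Dom D*` and having bounded commutator `[D*,a] := D*a − aD*`.  Let `A` be the
C*-subalgebra generated by `𝒜` and suppose `(u_n)` is a sequence in `𝒜` with
`‖[D*,u_n]‖ → 0` which is an operator-norm approximate unit for `A`.  Then (i) `(u_n)` is
an approximate unit for `𝒜` in the Lipschitz norm iff (ii) `(u_n)` is an operator-norm
approximate unit for the C*-subalgebra generated by `A` together with the commutators
`{[D*,a] : a ∈ 𝒜}`. -/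
theorem statement11
    {H : Type*} [NormedAddCommGroup H] [InnerProductSpace ℂ H] [CompleteSpace H]
    -- D closed, symmetric, densely defined
    (D : H →ₗ.[ℂ] H) (hdense : Dense (D.domain : Set H))
    (hclosed : D.IsClosed) (hsym : D ≤ D.adjoint)
    -- the *-closed set 𝒜 of bounded operators preserving Dom D*
    (𝒜 : Set (H →L[ℂ] H))
    (hstar : ∀ a ∈ 𝒜, ContinuousLinearMap.adjoint a ∈ 𝒜)
    (hmap : ∀ a ∈ 𝒜, ∀ h ∈ D.adjoint.domain, a h ∈ D.adjoint.domain)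
    (hbddcomm : ∀ a ∈ 𝒜, ∃ M : ℝ, ∀ h : D.adjoint.domain,
      ‖pApply D.adjoint (a h) - a (D.adjoint h)‖ ≤ M * ‖(h : H)‖)
    -- the sequence (u_n) in 𝒜 with ‖[D*,u_n]‖ → 0
    (u : ℕ → H →L[ℂ] H) (hu : ∀ n, u n ∈ 𝒜)
    (hucomm : ∃ ε : ℕ → ℝ, Tendsto ε atTop (𝓝 0) ∧ ∀ n, ∀ h : D.adjoint.domain,
      ‖pApply D.adjoint (u n (h : H)) - u n (D.adjoint h)‖ ≤ ε n * ‖(h : H)‖)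
    -- (u_n) is an operator-norm approximate unit for A = C*(𝒜)
    (huA : ∀ b ∈ (NonUnitalAlgebra.adjoin ℂ 𝒜).topologicalClosure,
      Tendsto (fun n => ‖u n * b - b‖) atTop (𝓝 0) ∧
      Tendsto (fun n => ‖b * u n - b‖) atTop (𝓝 0)) :
    -- (i) ↔ (ii)
    ((∀ a ∈ 𝒜, ∃ ε : ℕ → ℝ, Tendsto ε atTop (𝓝 0) ∧ ∀ n, ∀ h : D.adjoint.domain,
        ‖pApply D.adjoint ((a * u n - a) (h : H)) - (a * u n - a) (D.adjoint h)‖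
          ≤ ε n * ‖(h : H)‖ ∧
        ‖pApply D.adjoint ((u n * a - a) (h : H)) - (u n * a - a) (D.adjoint h)‖
          ≤ ε n * ‖(h : H)‖)
      ↔
      (∀ b ∈ (NonUnitalAlgebra.adjoin ℂ
          (𝒜 ∪ {T : H →L[ℂ] H | ∃ a ∈ 𝒜, ∀ h : D.adjoint.domain,
            T (h : H) = pApply D.adjoint (a h) - a (D.adjoint h)})).topologicalClosure,
        Tendsto (fun n => ‖u n * b - b‖) atTop (𝓝 0) ∧
        Tendsto (fun n => ‖b * u n - b‖) atTop (𝓝 0))) := by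
  have hdV : Dense ((D.adjoint.domain : Submodule ℂ H) : Set H) :=
    Dense.mono (fun x hx => hsym.1 hx) hdense
  obtain ⟨εu₀, hεu₀, hεu₀b⟩ := hucomm
  set εu : ℕ → ℝ := fun n => max (εu₀ n) 0 with hεudef
  have hεu_nn : ∀ n, 0 ≤ εu n := fun n => le_max_right _ _
  have hεu_t : Tendsto εu atTop (𝓝 0) := by
    have := hεu₀.max (tendsto_const_nhds (x := (0:ℝ)))
    simpa using this
  have hεub : ∀ n, ∀ h : D.adjoint.domain,
      ‖pApply D.adjoint (u n (h : H)) - u n (D.adjoint h)‖ ≤ εu n * ‖(h : H)‖ :=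
    fun n h => (hεu₀b n h).trans (mul_le_mul_of_nonneg_right (le_max_left _ _) (norm_nonneg _))
  set 𝒞 : Set (H →L[ℂ] H) := {T : H →L[ℂ] H | ∃ a ∈ 𝒜, ∀ h : D.adjoint.domain,
      T (h : H) = pApply D.adjoint (a h) - a (D.adjoint h)} with h𝒞
  constructor
  · -- (i) → (ii)
    intro hi b hb
    obtain ⟨Cu, hCu0, hCub⟩ := exists_bound 𝒜 hstar u hu huA
    have Pad : ∀ b' ∈ NonUnitalAlgebra.adjoin ℂ (𝒜 ∪ 𝒞),
        Tendsto (fun n => ‖u n * b' - b'‖) atTop (𝓝 0) ∧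
        Tendsto (fun n => ‖b' * u n - b'‖) atTop (𝓝 0) := by
      intro b' hb'
      induction hb' using NonUnitalAlgebra.adjoin_induction with
      | mem x hx =>
        rcases hx with hx | hx
        · exact huA x ((NonUnitalAlgebra.adjoin ℂ 𝒜).le_topologicalClosure
            (NonUnitalAlgebra.subset_adjoin ℂ hx))
        · obtain ⟨a, ha, hTx⟩ := hx
          obtain ⟨εa₀, hεa₀, hεa₀b⟩ := hi a ha
          set εa : ℕ → ℝ := fun n => max (εa₀ n) 0 with hεadef
          have hεa_nn : ∀ n, 0 ≤ εa n := fun n => le_max_right _ _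
          have hεa_t : Tendsto εa atTop (𝓝 0) := by
            have := hεa₀.max (tendsto_const_nhds (x := (0:ℝ)))
            simpa using this
          have hεab : ∀ n, ∀ h : D.adjoint.domain,
              ‖pApply D.adjoint ((a * u n - a) (h : H)) - (a * u n - a) (D.adjoint h)‖
                ≤ εa n * ‖(h : H)‖ ∧
              ‖pApply D.adjoint ((u n * a - a) (h : H)) - (u n * a - a) (D.adjoint h)‖
                ≤ εa n * ‖(h : H)‖ := by
            intro n h
            exact ⟨(hεa₀b n h).1.trans
                (mul_le_mul_of_nonneg_right (le_max_left _ _) (norm_nonneg _)),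
              (hεa₀b n h).2.trans
                (mul_le_mul_of_nonneg_right (le_max_left _ _) (norm_nonneg _))⟩
          constructor
          · -- ‖u n * x - x‖ → 0
            refine squeeze_zero (fun n => norm_nonneg _) (fun n => ?_)
              (by simpa using hεa_t.add (hεu_t.mul_const ‖a‖))
            refine ContinuousLinearMap.opNorm_le_bound _
              (add_nonneg (hεa_nn n) (mul_nonneg (hεu_nn n) (norm_nonneg a))) ?_
            refine bound_of_dense hdV _ (fun y hy => ?_)
            obtain ⟨k1, k2⟩ := key_lemma D 𝒜 hmap u hu a ha x hTx n ⟨y, hy⟩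
            have e : (u n * x - x) y
                = (pApply D.adjoint ((u n * a - a) y) - (u n * a - a) (D.adjoint ⟨y, hy⟩))
                  - (pApply D.adjoint (u n (a y))
                    - u n (D.adjoint ⟨a y, hmap a ha y hy⟩)) :=
              eq_sub_of_add_eq k2.symm
            rw [e]
            have b1 : ‖pApply D.adjoint ((u n * a - a) y) - (u n * a - a) (D.adjoint ⟨y, hy⟩)‖
                ≤ εa n * ‖y‖ := (hεab n ⟨y, hy⟩).2
            have b2 : ‖pApply D.adjoint (u n (a y)) - u n (D.adjoint ⟨a y, hmap a ha y hy⟩)‖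
                ≤ εu n * ‖a y‖ := hεub n ⟨a y, hmap a ha y hy⟩
            have b3 : εu n * ‖a y‖ ≤ εu n * (‖a‖ * ‖y‖) :=
              mul_le_mul_of_nonneg_left (a.le_opNorm y) (hεu_nn n)
            calc ‖_ - _‖ ≤ _ + _ := norm_sub_le _ _
              _ ≤ εa n * ‖y‖ + εu n * (‖a‖ * ‖y‖) := by linarith
              _ = (εa n + εu n * ‖a‖) * ‖y‖ := by ring
          · -- ‖x * u n - x‖ → 0
            refine squeeze_zero (fun n => norm_nonneg _) (fun n => ?_)
              (by simpa using hεa_t.add (hεu_t.mul_const ‖a‖))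
            refine ContinuousLinearMap.opNorm_le_bound _
              (add_nonneg (hεa_nn n) (mul_nonneg (hεu_nn n) (norm_nonneg a))) ?_
            refine bound_of_dense hdV _ (fun y hy => ?_)
            obtain ⟨k1, k2⟩ := key_lemma D 𝒜 hmap u hu a ha x hTx n ⟨y, hy⟩
            have e : (x * u n - x) y
                = (pApply D.adjoint ((a * u n - a) y) - (a * u n - a) (D.adjoint ⟨y, hy⟩))
                  - a (pApply D.adjoint (u n y) - u n (D.adjoint ⟨y, hy⟩)) :=
              eq_sub_of_add_eq k1.symm
            rw [e]
            have b1 : ‖pApply D.adjoint ((a * u n - a) y) - (a * u n - a) (D.adjoint ⟨y, hy⟩)‖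
                ≤ εa n * ‖y‖ := (hεab n ⟨y, hy⟩).1
            have b2 : ‖a (pApply D.adjoint (u n y) - u n (D.adjoint ⟨y, hy⟩))‖
                ≤ ‖a‖ * (εu n * ‖y‖) := by
              calc ‖a (pApply D.adjoint (u n y) - u n (D.adjoint ⟨y, hy⟩))‖
                  ≤ ‖a‖ * ‖pApply D.adjoint (u n y) - u n (D.adjoint ⟨y, hy⟩)‖ :=
                    a.le_opNorm _
                _ ≤ ‖a‖ * (εu n * ‖y‖) :=
                    mul_le_mul_of_nonneg_left (hεub n ⟨y, hy⟩) (norm_nonneg a)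
            calc ‖_ - _‖ ≤ _ + _ := norm_sub_le _ _
              _ ≤ εa n * ‖y‖ + ‖a‖ * (εu n * ‖y‖) := by linarith
              _ = (εa n + εu n * ‖a‖) * ‖y‖ := by ring
      | add x y hx hy px py =>
        constructor
        · refine squeeze_zero (fun n => norm_nonneg _) (fun n => ?_)
            (by simpa using px.1.add py.1)
          have e : u n * (x + y) - (x + y) = (u n * x - x) + (u n * y - y) := by noncomm_ring
          rw [e]; exact norm_add_le _ _
        · refine squeeze_zero (fun n => norm_nonneg _) (fun n => ?_)
            (by simpa using px.2.add py.2)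
          have e : (x + y) * u n - (x + y) = (x * u n - x) + (y * u n - y) := by noncomm_ring
          rw [e]; exact norm_add_le _ _
      | zero =>
        refine ⟨?_, ?_⟩ <;> simpa using (tendsto_const_nhds : Tendsto (fun _ : ℕ => (0:ℝ)) _ _)
      | mul x y hx hy px py =>
        constructor
        · refine squeeze_zero (fun n => norm_nonneg _) (fun n => ?_)
            (by simpa using px.1.mul_const ‖y‖)
          have e : u n * (x * y) - x * y = (u n * x - x) * y := by noncomm_ring
          rw [e]; exact norm_mul_le _ _
        · refine squeeze_zero (fun n => norm_nonneg _) (fun n => ?_)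
            (by simpa using py.2.const_mul ‖x‖)
          have e : (x * y) * u n - x * y = x * (y * u n - y) := by noncomm_ring
          rw [e]; exact norm_mul_le _ _
      | smul r x hx px =>
        constructor
        · refine squeeze_zero (fun n => norm_nonneg _) (fun n => ?_)
            (by simpa using px.1.const_mul ‖r‖)
          have e : u n * (r • x) - r • x = r • (u n * x - x) := by
            rw [mul_smul_comm, smul_sub]
          exact le_of_eq (by rw [e, norm_smul])
        · refine squeeze_zero (fun n => norm_nonneg _) (fun n => ?_)
            (by simpa using px.2.const_mul ‖r‖)
          have e : (r • x) * u n - r • x = r • (x * u n - x) := by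
            rw [smul_mul_assoc, smul_sub]
          exact le_of_eq (by rw [e, norm_smul])
    have hb' : b ∈ closure ((NonUnitalAlgebra.adjoin ℂ (𝒜 ∪ 𝒞) : Set (H →L[ℂ] H))) := hb
    constructor
    · apply tendsto_zero_of_approx (fun n => norm_nonneg _)
      intro ε hε
      obtain ⟨b', hb'mem, hdist⟩ := Metric.mem_closure_iff.mp hb' (ε/2/(Cu+1))
        (div_pos (by linarith) (by linarith))
      rw [dist_eq_norm] at hdist
      refine ⟨fun n => ‖u n * b' - b'‖, (Pad b' hb'mem).1, fun n => ?_⟩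
      have e : u n * b - b = (u n * b' - b') + (u n * (b - b') - (b - b')) := by noncomm_ring
      have h1 : ‖u n * (b - b') - (b - b')‖ ≤ (Cu + 1) * ‖b - b'‖ := by
        calc ‖u n * (b - b') - (b - b')‖ ≤ ‖u n * (b - b')‖ + ‖b - b'‖ := norm_sub_le _ _
          _ ≤ ‖u n‖ * ‖b - b'‖ + ‖b - b'‖ := by
              have := norm_mul_le (u n) (b - b'); linarith
          _ ≤ (Cu + 1) * ‖b - b'‖ := by nlinarith [hCub n, norm_nonneg (b - b')]
      have h2 : (Cu + 1) * ‖b - b'‖ ≤ ε / 2 := by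
        have hle : ‖b - b'‖ ≤ ε/2/(Cu+1) := le_of_lt hdist
        have hpos : (0:ℝ) < Cu + 1 := by linarith
        calc (Cu+1) * ‖b-b'‖ ≤ (Cu+1) * (ε/2/(Cu+1)) := by nlinarith
          _ = ε/2 := by field_simp
      calc ‖u n * b - b‖ ≤ ‖u n * b' - b'‖ + ‖u n * (b - b') - (b - b')‖ := by
            rw [e]; exact norm_add_le _ _
        _ ≤ ‖u n * b' - b'‖ + ε/2 := by linarith
    · apply tendsto_zero_of_approx (fun n => norm_nonneg _)
      intro ε hε
      obtain ⟨b', hb'mem, hdist⟩ := Metric.mem_closure_iff.mp hb' (ε/2/(Cu+1))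
        (div_pos (by linarith) (by linarith))
      rw [dist_eq_norm] at hdist
      refine ⟨fun n => ‖b' * u n - b'‖, (Pad b' hb'mem).2, fun n => ?_⟩
      have e : b * u n - b = (b' * u n - b') + ((b - b') * u n - (b - b')) := by noncomm_ring
      have h1 : ‖(b - b') * u n - (b - b')‖ ≤ (Cu + 1) * ‖b - b'‖ := by
        calc ‖(b - b') * u n - (b - b')‖ ≤ ‖(b - b') * u n‖ + ‖b - b'‖ := norm_sub_le _ _
          _ ≤ ‖b - b'‖ * ‖u n‖ + ‖b - b'‖ := by
              have := norm_mul_le (b - b') (u n); linarith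
          _ ≤ (Cu + 1) * ‖b - b'‖ := by nlinarith [hCub n, norm_nonneg (b - b')]
      have h2 : (Cu + 1) * ‖b - b'‖ ≤ ε / 2 := by
        have hle : ‖b - b'‖ ≤ ε/2/(Cu+1) := le_of_lt hdist
        have hpos : (0:ℝ) < Cu + 1 := by linarith
        calc (Cu+1) * ‖b-b'‖ ≤ (Cu+1) * (ε/2/(Cu+1)) := by nlinarith
          _ = ε/2 := by field_simp
      calc ‖b * u n - b‖ ≤ ‖b' * u n - b'‖ + ‖(b - b') * u n - (b - b')‖ := by
            rw [e]; exact norm_add_le _ _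
        _ ≤ ‖b' * u n - b'‖ + ε/2 := by linarith
  · -- (ii) → (i)
    intro hii a ha
    obtain ⟨M, hM⟩ := hbddcomm a ha
    obtain ⟨T, hT⟩ := exists_ext D hdV a (hmap a ha) M hM
    have hTmem : T ∈ (NonUnitalAlgebra.adjoin ℂ (𝒜 ∪ 𝒞)).topologicalClosure := by
      have : T ∈ 𝒜 ∪ 𝒞 := Or.inr ⟨a, ha, hT⟩
      exact subset_closure (NonUnitalAlgebra.subset_adjoin ℂ this)
    obtain ⟨hl, hr⟩ := hii T hTmem
    refine ⟨fun n => max (‖T * u n - T‖ + ‖a‖ * εu n) (‖u n * T - T‖ + εu n * ‖a‖), ?_, ?_⟩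
    · have := (hr.add (hεu_t.const_mul ‖a‖)).max (hl.add (hεu_t.mul_const ‖a‖))
      simpa using this
    · intro n h
      obtain ⟨k1, k2⟩ := key_lemma D 𝒜 hmap u hu a ha T hT n h
      constructor
      · rw [k1]
        have h1 : ‖(T * u n - T) (h : H)‖ ≤ ‖T * u n - T‖ * ‖(h : H)‖ :=
          (T * u n - T).le_opNorm _
        have h2 : ‖a (pApply D.adjoint (u n (h : H)) - u n (D.adjoint h))‖
            ≤ ‖a‖ * (εu n * ‖(h : H)‖) := by
          calc ‖a (pApply D.adjoint (u n (h : H)) - u n (D.adjoint h))‖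
              ≤ ‖a‖ * ‖pApply D.adjoint (u n (h : H)) - u n (D.adjoint h)‖ := a.le_opNorm _
            _ ≤ ‖a‖ * (εu n * ‖(h : H)‖) :=
                mul_le_mul_of_nonneg_left (hεub n h) (norm_nonneg a)
        calc ‖_ + _‖ ≤ _ + _ := norm_add_le _ _
          _ ≤ (‖T * u n - T‖ + ‖a‖ * εu n) * ‖(h : H)‖ := by
              have : (‖T * u n - T‖ + ‖a‖ * εu n) * ‖(h : H)‖
                  = ‖T * u n - T‖ * ‖(h : H)‖ + ‖a‖ * (εu n * ‖(h : H)‖) := by ring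
              linarith
          _ ≤ max (‖T * u n - T‖ + ‖a‖ * εu n) (‖u n * T - T‖ + εu n * ‖a‖) * ‖(h : H)‖ :=
              mul_le_mul_of_nonneg_right (le_max_left _ _) (norm_nonneg _)
      · rw [k2]
        have h1 : ‖(u n * T - T) (h : H)‖ ≤ ‖u n * T - T‖ * ‖(h : H)‖ :=
          (u n * T - T).le_opNorm _
        have h2 : ‖pApply D.adjoint (u n (a (h : H)))
              - u n (D.adjoint ⟨a (h : H), hmap a ha (h : H) h.2⟩)‖
            ≤ εu n * (‖a‖ * ‖(h : H)‖) := by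
          have := hεub n ⟨a (h : H), hmap a ha (h : H) h.2⟩
          calc ‖pApply D.adjoint (u n (a (h : H)))
                - u n (D.adjoint ⟨a (h : H), hmap a ha (h : H) h.2⟩)‖
              ≤ εu n * ‖a (h : H)‖ := this
            _ ≤ εu n * (‖a‖ * ‖(h : H)‖) :=
                mul_le_mul_of_nonneg_left (a.le_opNorm _) (hεu_nn n)
        calc ‖_ + _‖ ≤ _ + _ := norm_add_le _ _
          _ ≤ (‖u n * T - T‖ + εu n * ‖a‖) * ‖(h : H)‖ := by
              have : (‖u n * T - T‖ + εu n * ‖a‖) * ‖(h : H)‖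
                  = ‖u n * T - T‖ * ‖(h : H)‖ + εu n * (‖a‖ * ‖(h : H)‖) := by ring
              linarith
          _ ≤ max (‖T * u n - T‖ + ‖a‖ * εu n) (‖u n * T - T‖ + εu n * ‖a‖) * ‖(h : H)‖ :=
              mul_le_mul_of_nonneg_right (le_max_right _ _) (norm_nonneg _)
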